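/- Let ξ ∈ [n] and let S be a multiset with |S| ≤ k-1 whose elements are from [n]. Let Q = {x^{k-2}(x - x_ξ), x^{k-3}(x - x_ξ), ..., x(x - x_ξ), x - x_ξ, p(S)} ⊆ F_q(x_1,...,x_n)[x]. Then det(C(Q)) = ∏_{i ∈ S} (x_ξ - x_i). In particular, det(C(Q)) is nonzero in F_q(x_1,...,x_n) if and only if ξ ∉ S. -/

import Mathlib

/-- The variable `x_i`, viewed as an element of the rational function field
`F_q(x_1, ..., x_n) = Frac(F_q[x_1, ..., x_n])`. -/
noncomputable def xvar (F : Type) [Field F] (n : ℕ) (i : Fin n) :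
    FractionRing (MvPolynomial (Fin n) F) :=
  algebraMap (MvPolynomial (Fin n) F) (FractionRing (MvPolynomial (Fin n) F)) (MvPolynomial.X i)

/-- For a multiset `S` with elements from `[n]`, the polynomial
`p(S) = ∏_{i ∈ S} (x - x_i)` in `F_q(x_1, ..., x_n)[x]` (with multiplicity). -/
noncomputable def polyOfMultiset (F : Type) [Field F] (n : ℕ) (S : Multiset (Fin n)) :
    Polynomial (FractionRing (MvPolynomial (Fin n) F)) :=
  (S.map fun i => Polynomial.X - Polynomial.C (xvar F n i)).prod

/-- The coefficient matrix `C(P)` of a family of `k` polynomials of degree at most `k - 1`: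
`C(P)_{i,j} = c_{i,j}` where `p_i(x) = c_{i,1} x^{k-1} + ... + c_{i,k-1} x + c_{i,k}`;
with zero-indexed `j : Fin k`, the `(i, j)` entry is the coefficient of `x^(k-1-j)` in `p_i`. -/
noncomputable def coeffMatrix {K : Type} [Field K] (k : ℕ) (p : Fin k → Polynomial K) :
    Matrix (Fin k) (Fin k) K :=
  fun i j => (p i).coeff (k - 1 - j.val)

/-- The family `Q = {x^{k-2}(x - x_ξ), x^{k-3}(x - x_ξ), ..., x(x - x_ξ), x - x_ξ, p(S)}`:
row `i < k - 1` (zero-indexed) is `x^{k-2-i} (x - x_ξ)`, and the last row is `p(S)`. -/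
noncomputable def Qfamily (F : Type) [Field F] (n k : ℕ) (ξ : Fin n) (S : Multiset (Fin n)) :
    Fin k → Polynomial (FractionRing (MvPolynomial (Fin n) F)) :=
  fun i =>
    if i.val < k - 1 then
      Polynomial.X ^ (k - 2 - i.val) * (Polynomial.X - Polynomial.C (xvar F n ξ))
    else polyOfMultiset F n S

section aux
open Polynomial Matrix

variable (F : Type) [Field F] (n : ℕ)

lemma xvar_injective : Function.Injective (xvar F n) := by
  intro i j h
  exact MvPolynomial.X_injective (IsFractionRing.injective (MvPolynomial (Fin n) F)
    (FractionRing (MvPolynomial (Fin n) F)) h)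

lemma natDegree_polyOfMultiset_le (S : Multiset (Fin n)) :
    (polyOfMultiset F n S).natDegree ≤ S.card := by
  classical
  refine le_trans (Polynomial.natDegree_multiset_prod_le _) ?_
  rw [Multiset.map_map]
  have : ∀ i : Fin n, ((Polynomial.natDegree ∘ fun i =>
      (Polynomial.X - Polynomial.C (xvar F n i))) i) = 1 := by
    intro i; simp [Polynomial.natDegree_X_sub_C]
  rw [Multiset.map_congr rfl (fun i _ => this i)]
  simp [Multiset.map_const']

end aux

/-- Let `ξ ∈ [n]` and let `S` be a multiset with `|S| ≤ k - 1` and elements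
from `[n]`.  Let `Q = {x^{k-2}(x - x_ξ), ..., x(x - x_ξ), x - x_ξ, p(S)}`.  Then
`det C(Q) = ∏_{i ∈ S} (x_ξ - x_i)`; in particular `det C(Q) ≠ 0` iff `ξ ∉ S`. -/
theorem stmt_3 (F : Type) [Field F] [Fintype F] (n k : ℕ) (hk : 1 ≤ k)
    (ξ : Fin n) (S : Multiset (Fin n)) (hS : S.card ≤ k - 1) :
    (coeffMatrix k (Qfamily F n k ξ S)).det =
        (S.map fun i => xvar F n ξ - xvar F n i).prod ∧
      ((coeffMatrix k (Qfamily F n k ξ S)).det ≠ 0 ↔ ξ ∉ S) := by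
  classical
  set K := FractionRing (MvPolynomial (Fin n) F)
  set a : K := xvar F n ξ with ha
  set p : Polynomial K := polyOfMultiset F n S with hp
  set M : Matrix (Fin k) (Fin k) K := coeffMatrix k (Qfamily F n k ξ S) with hMdef
  set T : Matrix (Fin k) (Fin k) K :=
    fun i j => if i ≤ j then a ^ (j.val - i.val) else 0 with hTdef
  have hTife : ∀ i j : Fin k, T i j = if i ≤ j then a ^ (j.val - i.val) else 0 := by
    intro i j; rw [hTdef]
  have hpdeg : p.natDegree < k := lt_of_le_of_lt
    (le_trans (natDegree_polyOfMultiset_le F n S) hS) (by omega)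
  -- entries of top rows of M
  have hM : ∀ i j : Fin k, i.val < k - 1 →
      M i j = (if j = i then (1 : K) else 0) - (if j.val = i.val + 1 then a else 0) := by
    intro i j hi
    have hQ : Qfamily F n k ξ S i =
        Polynomial.X ^ (k - 2 - i.val) * (Polynomial.X - Polynomial.C a) := by
      simp [Qfamily, hi, ha]
    have hstart : M i j = (Polynomial.X ^ (k - 2 - i.val) *
        (Polynomial.X - Polynomial.C a) : Polynomial K).coeff (k - 1 - j.val) := by
      rw [hMdef]; simp only [coeffMatrix, hQ]
    rw [hstart, mul_sub, ← pow_succ, Polynomial.coeff_sub, Polynomial.coeff_X_pow,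
      Polynomial.coeff_mul_C, Polynomial.coeff_X_pow]
    have hj := j.isLt
    have hik := i.isLt
    have h1 : (k - 1 - j.val = k - 2 - i.val + 1) ↔ j = i := by
      rw [Fin.ext_iff]; omega
    have h2 : (k - 1 - j.val = k - 2 - i.val) ↔ j.val = i.val + 1 := by omega
    rw [if_congr h1 rfl rfl, if_congr h2 rfl rfl]
    by_cases h : j.val = i.val + 1
    · have hne : j ≠ i := by
        intro he; rw [he] at h; omega
      simp [h, hne]
    · simp [h]
  -- entries of M * T in top rows
  have hMT : ∀ i j : Fin k, i.val < k - 1 →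
      (M * T) i j = if j = i then (1 : K) else 0 := by
    intro i j hi
    have hi1 : i.val + 1 < k := by omega
    rw [Matrix.mul_apply]
    have hterm : ∀ l : Fin k, M i l * T l j =
        (if l = i then T i j else 0) - (if l = (⟨i.val + 1, hi1⟩ : Fin k)
          then a * T ⟨i.val + 1, hi1⟩ j else 0) := by
      intro l
      rw [hM i l hi]
      have hc : (l.val = i.val + 1) ↔ l = (⟨i.val + 1, hi1⟩ : Fin k) := by
        rw [Fin.ext_iff]
      rw [if_congr hc rfl rfl]
      by_cases h1 : l = i
      · rw [h1]
        have h2' : ¬ (i = (⟨i.val + 1, hi1⟩ : Fin k)) := fun he => by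
          have := Fin.ext_iff.mp he; omega
        simp [h2']
      · by_cases h2 : l = (⟨i.val + 1, hi1⟩ : Fin k)
        · rw [h2]
          have h1' : ¬ ((⟨i.val + 1, hi1⟩ : Fin k) = i) := fun he => by
            have := Fin.ext_iff.mp he; omega
          simp [h1', sub_mul]
          ring
        · simp [h1, h2]
    rw [Finset.sum_congr rfl (fun l _ => hterm l), Finset.sum_sub_distrib,
      Finset.sum_ite_eq' Finset.univ i, Finset.sum_ite_eq' Finset.univ]
    simp only [Finset.mem_univ, if_true]
    rw [hTife i j, hTife ⟨i.val + 1, hi1⟩ j]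
    by_cases hji : j = i
    · subst hji
      have h2 : ¬ ((⟨j.val + 1, hi1⟩ : Fin k) ≤ j) := by
        rw [Fin.le_def]; show ¬ (j.val + 1 ≤ j.val); omega
      simp [h2]
    · by_cases hle : i ≤ j
      · have hne : i.val ≠ j.val := fun h => hji (Fin.ext h.symm)
        have hlt : i.val < j.val := lt_of_le_of_ne (Fin.le_def.mp hle) hne
        have h2 : (⟨i.val + 1, hi1⟩ : Fin k) ≤ j := by
          rw [Fin.le_def]; show i.val + 1 ≤ j.val; omega
        rw [if_pos hle, if_pos h2, if_neg hji]
        show a ^ (j.val - i.val) - a * a ^ (j.val - (i.val + 1)) = 0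
        rw [← pow_succ', show j.val - (i.val + 1) + 1 = j.val - i.val from by omega,
          sub_self]
      · have h2 : ¬ ((⟨i.val + 1, hi1⟩ : Fin k) ≤ j) := by
          rw [Fin.le_def]; show ¬ (i.val + 1 ≤ j.val)
          have := Fin.le_def.not.mp hle; omega
        rw [if_neg hle, if_neg h2, if_neg hji]
        simp
  -- the last diagonal entry of M * T is p.eval a
  have hlastk : k - 1 < k := by omega
  have hlast : (M * T) ⟨k - 1, hlastk⟩ ⟨k - 1, hlastk⟩ = p.eval a := by
    rw [Matrix.mul_apply]
    have hMe : ∀ l : Fin k, M ⟨k - 1, hlastk⟩ l = p.coeff (k - 1 - l.val) := by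
      intro l
      rw [hMdef]
      simp [coeffMatrix, Qfamily, hp]
    have hTe : ∀ l : Fin k, T l ⟨k - 1, hlastk⟩ = a ^ (k - 1 - l.val) := by
      intro l
      rw [hTife]
      have hle : l ≤ (⟨k - 1, hlastk⟩ : Fin k) := by
        rw [Fin.le_def]; exact Nat.le_sub_one_of_lt l.isLt
      rw [if_pos hle]
    have hterm : ∀ l : Fin k, M ⟨k - 1, hlastk⟩ l * T l ⟨k - 1, hlastk⟩ =
        p.coeff (k - 1 - l.val) * a ^ (k - 1 - l.val) := by
      intro l; rw [hMe, hTe]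
    rw [Finset.sum_congr rfl (fun l _ => hterm l)]
    rw [Polynomial.eval_eq_sum_range' hpdeg, ← Fin.sum_univ_eq_sum_range]
    refine Fintype.sum_equiv Fin.revPerm _ _ (fun l => ?_)
    simp only [Fin.revPerm_apply, Fin.val_rev]
    rw [show k - (l.val + 1) = k - 1 - l.val from by omega]
  -- lower triangularity of M * T
  have htri : (M * T).BlockTriangular OrderDual.toDual := by
    intro i j hij
    have hij' : i < j := hij
    have hik : i.val < k - 1 := by
      have hjk := j.isLt
      have := Fin.lt_def.mp hij'
      omega
    rw [hMT i j hik]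
    exact if_neg (fun h : j = i => absurd (h ▸ hij') (lt_irrefl i))
  have hdetMT : (M * T).det = p.eval a := by
    rw [Matrix.det_of_lowerTriangular _ htri]
    have hdiag : ∀ i : Fin k, (M * T) i i = if i.val < k - 1 then 1 else p.eval a := by
      intro i
      by_cases hi : i.val < k - 1
      · rw [hMT i i hi]; simp [hi]
      · have : i = ⟨k - 1, hlastk⟩ := by
          rw [Fin.ext_iff]
          have := i.isLt
          simp only
          omega
        rw [this, hlast]
        have : ¬ ((⟨k - 1, hlastk⟩ : Fin k).val < k - 1) := by
          show ¬ (k - 1 < k - 1); omega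
        rw [if_neg this]
    rw [Finset.prod_congr rfl (fun i _ => hdiag i)]
    rw [Finset.prod_eq_single (⟨k - 1, hlastk⟩ : Fin k)
      (fun b _ hb => by
        have hbv : b.val ≠ k - 1 := fun h => hb (Fin.ext h)
        have := b.isLt
        have hblt : b.val < k - 1 := by omega
        simp [hblt])
      (fun h => absurd (Finset.mem_univ _) h)]
    have : ¬ ((⟨k - 1, hlastk⟩ : Fin k).val < k - 1) := by
      show ¬ (k - 1 < k - 1); omega
    rw [if_neg this]
  have hdetT : T.det = 1 := by
    have htriT : T.BlockTriangular id := by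
      intro i j hij
      rw [hTife]
      exact if_neg (fun h => absurd (lt_of_le_of_lt h hij) (lt_irrefl _))
    rw [Matrix.det_of_upperTriangular htriT]
    refine Finset.prod_eq_one (fun i _ => ?_)
    rw [hTife, if_pos le_rfl, Nat.sub_self, pow_zero]
  have hdetM : M.det = p.eval a := by
    have hmul := hdetMT
    rw [Matrix.det_mul, hdetT, mul_one] at hmul
    exact hmul
  have heval : p.eval a = (S.map fun i => xvar F n ξ - xvar F n i).prod := by
    rw [hp, polyOfMultiset, Polynomial.eval_multiset_prod, Multiset.map_map]
    congr 1
    refine Multiset.map_congr rfl (fun i _ => ?_)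
    simp [ha]
  refine ⟨hdetM.trans heval, ?_⟩
  rw [hdetM, heval]
  rw [Ne, Multiset.prod_eq_zero_iff]
  constructor
  · intro h hxi
    exact h (Multiset.mem_map.mpr ⟨ξ, hxi, by simp⟩)
  · intro h hmem
    obtain ⟨i, hi, hzero⟩ := Multiset.mem_map.mp hmem
    have hξi : ξ = i := xvar_injective F n (sub_eq_zero.mp hzero)
    subst hξi
    exact h hi
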